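/- Let H be an N × N Hermitian matrix over ℂ (indexed by a finite nonempty set) whose off-diagonal entries are all real and nonpositive. Suppose Hψ = Eψ for a real number E and a vector ψ with ψ(z) > 0 for all z. Then E equals the smallest eigenvalue of H. -/

import Mathlib

open scoped ComplexOrder

open Finset in
private lemma aux_eig_ge {ι : Type*} [Fintype ι] [DecidableEq ι] [Nonempty ι]
    (H : Matrix ι ι ℂ) (hH : H.IsHermitian)
    (hsto : ∀ z z', z ≠ z' → H z z' ≤ 0)
    (E : ℝ) (ψ : ι → ℂ) (hψ : ∀ z, 0 < ψ z)
    (heig : H.mulVec ψ = (E : ℂ) • ψ)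
    (lam : ℝ) (v : ι → ℂ) (hv : v ≠ 0) (hvE : H.mulVec v = lam • v) :
    E ≤ lam := by
  have hψre : ∀ z, 0 < (ψ z).re := fun z => (Complex.lt_def.1 (hψ z)).1
  have hψim : ∀ z, (ψ z).im = 0 := fun z => ((Complex.lt_def.1 (hψ z)).2).symm
  -- choose maximizer of ‖v z‖ / (ψ z).re
  obtain ⟨z0, -, hz0⟩ := Finset.exists_max_image Finset.univ
    (fun z => ‖v z‖ / (ψ z).re) Finset.univ_nonempty
  set c : ℝ := ‖v z0‖ / (ψ z0).re with hc
  have hz0' : ∀ z, ‖v z‖ ≤ c * (ψ z).re := by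
    intro z
    have := hz0 z (Finset.mem_univ z)
    calc ‖v z‖ = ‖v z‖ / (ψ z).re * (ψ z).re := by
          rw [div_mul_cancel₀ _ (hψre z).ne']
      _ ≤ c * (ψ z).re := mul_le_mul_of_nonneg_right this (hψre z).le
  have hcpos : 0 < c := by
    obtain ⟨z1, hz1⟩ := Function.ne_iff.1 hv
    have h1 : 0 < ‖v z1‖ / (ψ z1).re :=
      div_pos (norm_pos_iff.2 hz1) (hψre z1)
    exact lt_of_lt_of_le h1 (hz0 z1 (Finset.mem_univ z1))
  have hvz0 : ‖v z0‖ = c * (ψ z0).re := by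
    rw [hc, div_mul_cancel₀ _ (hψre z0).ne']
  -- diagonal entry is real
  have hdiag : H z0 z0 = ((H z0 z0).re : ℂ) := by
    have := congrFun (congrFun hH z0) z0
    simp only [Matrix.conjTranspose_apply] at this
    exact ((Complex.conj_eq_iff_re.1 this)).symm
  set d : ℝ := (H z0 z0).re with hd
  -- off-diagonal entries real nonpositive
  have hoff : ∀ z, z0 ≠ z → H z0 z = ((H z0 z).re : ℂ) ∧ (H z0 z).re ≤ 0 := by
    intro z hz
    have h := Complex.le_def.1 (hsto z0 z hz)
    refine ⟨Complex.ext rfl ?_, h.1⟩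
    · simpa using h.2
  -- the eigen equation for ψ at z0, real part
  have hEψ : ∑ z ∈ Finset.univ.erase z0, (H z0 z).re * (ψ z).re
      = (E - d) * (ψ z0).re := by
    have h1 : (H.mulVec ψ z0).re = (((E : ℂ) • ψ) z0).re := by rw [heig]
    have h2 : (H.mulVec ψ z0).re = ∑ z, (H z0 z).re * (ψ z).re := by
      simp only [Matrix.mulVec, dotProduct, Complex.re_sum]
      refine Finset.sum_congr rfl fun z _ => ?_
      simp [Complex.mul_re, hψim z]
    have h3 : (((E : ℂ) • ψ) z0).re = E * (ψ z0).re := by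
      simp [Complex.mul_re, hψim z0]
    rw [h2, h3] at h1
    rw [← Finset.add_sum_erase _ _ (Finset.mem_univ z0)] at h1
    linarith
  -- the eigen equation for v at z0
  have hEv : ((lam : ℂ) - H z0 z0) * v z0 = ∑ z ∈ Finset.univ.erase z0, H z0 z * v z := by
    have h1 : H.mulVec v z0 = (lam : ℂ) * v z0 := by
      rw [hvE]; simp [Complex.real_smul]
    have h2 : H.mulVec v z0 = H z0 z0 * v z0 + ∑ z ∈ Finset.univ.erase z0, H z0 z * v z := by
      simp only [Matrix.mulVec, dotProduct]
      rw [← Finset.add_sum_erase _ _ (Finset.mem_univ z0)]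
    rw [h2] at h1
    linear_combination -h1
  -- norm bound
  have hbound : ‖(lam : ℂ) - H z0 z0‖ * ‖v z0‖ ≤ c * ((d - E) * (ψ z0).re) := by
    calc ‖(lam : ℂ) - H z0 z0‖ * ‖v z0‖ = ‖((lam : ℂ) - H z0 z0) * v z0‖ := by
          rw [norm_mul]
      _ = ‖∑ z ∈ Finset.univ.erase z0, H z0 z * v z‖ := by rw [hEv]
      _ ≤ ∑ z ∈ Finset.univ.erase z0, ‖H z0 z * v z‖ := norm_sum_le _ _
      _ ≤ ∑ z ∈ Finset.univ.erase z0, (-(H z0 z).re) * (c * (ψ z).re) := by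
          refine Finset.sum_le_sum fun z hz => ?_
          obtain ⟨hre, hle⟩ := hoff z (Finset.ne_of_mem_erase hz).symm
          rw [norm_mul]
          have h1 : ‖H z0 z‖ = -(H z0 z).re := by
            rw [hre, Complex.norm_real, Real.norm_eq_abs, abs_of_nonpos hle,
              Complex.ofReal_re]
          rw [h1]
          exact mul_le_mul_of_nonneg_left (hz0' z) (by linarith)
      _ = c * ((d - E) * (ψ z0).re) := by
          have h4 : ∑ z ∈ Finset.univ.erase z0, -(H z0 z).re * (c * (ψ z).re)
              = -c * ∑ z ∈ Finset.univ.erase z0, (H z0 z).re * (ψ z).re := by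
            rw [Finset.mul_sum]
            exact Finset.sum_congr rfl fun z _ => by ring
          rw [h4, hEψ]; ring
  -- conclude
  have hnorm : ‖(lam : ℂ) - H z0 z0‖ ≤ d - E := by
    rw [hvz0] at hbound
    have hpos : 0 < c * (ψ z0).re := mul_pos hcpos (hψre z0)
    nlinarith [hbound, hpos]
  have heqn : ‖(lam : ℂ) - H z0 z0‖ = |lam - d| := by
    rw [hdiag, ← Complex.ofReal_sub, Complex.norm_real, Real.norm_eq_abs]
  rw [heqn] at hnorm
  have := neg_abs_le (lam - d)
  linarith [abs_nonneg (lam - d)]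

theorem stmt7 {ι : Type*} [Fintype ι] [DecidableEq ι] [Nonempty ι]
    (H : Matrix ι ι ℂ) (hH : H.IsHermitian)
    (hsto : ∀ z z', z ≠ z' → H z z' ≤ 0)
    (E : ℝ) (ψ : ι → ℂ) (hψ : ∀ z, 0 < ψ z)
    (heig : H.mulVec ψ = (E : ℂ) • ψ) :
    E = Finset.univ.inf' Finset.univ_nonempty hH.eigenvalues := by
  -- every eigenvalue is ≥ E
  have hb : ∀ i, E ≤ hH.eigenvalues i := by
    intro i
    refine aux_eig_ge H hH hsto E ψ hψ heig _ _ ?_ (hH.mulVec_eigenvectorBasis i)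
    intro h
    apply hH.eigenvectorBasis.orthonormal.ne_zero i
    ext z
    exact congrFun h z
  -- coefficients of ψ in the eigenbasis
  have key : ∀ i, ((hH.eigenvalues i : ℂ) - E) *
      (dotProduct (star ⇑(hH.eigenvectorBasis i)) ψ) = 0 := by
    intro i
    set v : ι → ℂ := ⇑(hH.eigenvectorBasis i) with hv
    have h1 : dotProduct (star v) (H.mulVec ψ)
        = (hH.eigenvalues i : ℂ) * dotProduct (star v) ψ := by
      rw [Matrix.dotProduct_mulVec]
      have h2 : Matrix.vecMul (star v) H = star (H.mulVec v) := by
        rw [Matrix.star_mulVec, hH.eq]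
      rw [h2, hH.mulVec_eigenvectorBasis i]
      have h3 : star (hH.eigenvalues i • v) = hH.eigenvalues i • star v := by
        ext z; simp [Complex.real_smul]
      rw [← hv, h3]
      simp [smul_dotProduct, Complex.real_smul]
    have h4 : dotProduct (star v) (H.mulVec ψ)
        = (E : ℂ) * dotProduct (star v) ψ := by
      rw [heig]
      simp [dotProduct_smul]
    rw [h4] at h1
    linear_combination -h1
  -- some coefficient is nonzero
  have hex : ∃ i, dotProduct (star ⇑(hH.eigenvectorBasis i)) ψ ≠ 0 := by
    by_contra hcon
    push_neg at hcon
    have hψ0 : (WithLp.toLp 2 ψ : EuclideanSpace ℂ ι) = 0 := by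
      have := hH.eigenvectorBasis.repr.map_eq_zero_iff (x := (WithLp.toLp 2 ψ : EuclideanSpace ℂ ι))
      rw [← this]
      ext i
      rw [OrthonormalBasis.repr_apply_apply, EuclideanSpace.inner_eq_star_dotProduct]
      simpa [dotProduct_comm] using hcon i
    have := hψ (Classical.arbitrary ι)
    rw [show ψ (Classical.arbitrary ι) = 0 from by simpa using congrArg (fun x : EuclideanSpace ℂ ι => x (Classical.arbitrary ι)) hψ0] at this
    exact lt_irrefl _ this
  obtain ⟨i0, hi0⟩ := hex
  have hEi0 : hH.eigenvalues i0 = E := by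
    have := key i0
    rcases mul_eq_zero.1 this with h | h
    · have := sub_eq_zero.1 h
      exact_mod_cast this
    · exact absurd h hi0
  refine le_antisymm (Finset.le_inf' _ _ fun i _ => hb i) ?_
  exact hEi0 ▸ Finset.inf'_le _ (Finset.mem_univ i0)
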